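/- For every ε > 0, the function n ↦ ∑ gcd(a,k)·gcd(b,ℓ), where the sum is over all quadruples (a,b,k,ℓ) of positive integers with ak + bℓ = n, is O(n^{3/2+ε}) as n → ∞. -/

import Mathlib

open Filter Asymptotics Finset Real

namespace TwoCylAux

-- exp x ≥ x^2/4 for x ≥ 0
lemma exp_ge_sq_div_four {x : ℝ} (hx : 0 ≤ x) : x^2/4 ≤ Real.exp x := by
  have h := Real.add_one_le_exp (x/2)
  have h2 : Real.exp x = Real.exp (x/2) ^ 2 := by
    rw [← Real.exp_nat_mul]; ring_nf
  nlinarith [Real.exp_pos (x/2)]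

-- Step A: (e+1) ≤ K * 2^(δ e)
lemma stepA (δ : ℝ) (hδ : 0 < δ) (e : ℕ) :
    (e + 1 : ℝ) ≤ max 1 (8/(δ * Real.log 2)^2) * (2:ℝ) ^ (δ * e) := by
  set K := max 1 (8/(δ * Real.log 2)^2) with hK
  have hl2 : 0 < Real.log 2 := Real.log_pos (by norm_num)
  have hKpos : (0:ℝ) < K := lt_of_lt_of_le one_pos (le_max_left _ _)
  rcases Nat.eq_zero_or_pos e with he | he
  · subst he
    simp only [Nat.cast_zero, mul_zero, Real.rpow_zero, mul_one, zero_add]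
    exact le_max_left _ _
  · have he1 : (1:ℝ) ≤ e := by exact_mod_cast he
    have hx : (0:ℝ) ≤ δ * e := by positivity
    have hrw : (2:ℝ) ^ (δ * e) = Real.exp (δ * e * Real.log 2) := by
      rw [Real.rpow_def_of_pos (by norm_num)]; ring_nf
    have hexp : (δ * e * Real.log 2)^2/4 ≤ (2:ℝ) ^ (δ * e) := by
      rw [hrw]; exact exp_ge_sq_div_four (by positivity)
    have hKge : 8/(δ * Real.log 2)^2 ≤ K := le_max_right _ _
    have hd : (0:ℝ) < (δ * Real.log 2)^2 := by positivity
    calc (e + 1 : ℝ) ≤ 2 * e^2 := by nlinarith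
      _ = 8/(δ * Real.log 2)^2 * ((δ * e * Real.log 2)^2/4) := by
          field_simp; ring
      _ ≤ K * ((δ * e * Real.log 2)^2/4) := by
          apply mul_le_mul_of_nonneg_right hKge (by positivity)
      _ ≤ K * (2:ℝ) ^ (δ * e) := by
          apply mul_le_mul_of_nonneg_left hexp (le_of_lt hKpos)

-- main divisor bound
lemma divisor_bound (δ : ℝ) (hδ : 0 < δ) :
    ∃ C : ℝ, 1 ≤ C ∧ ∀ m : ℕ, m ≠ 0 → (m.divisors.card : ℝ) ≤ C * (m:ℝ) ^ δ := by
  classical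
  set K := max 1 (8/(δ * Real.log 2)^2) with hKdef
  have hK1 : (1:ℝ) ≤ K := le_max_left _ _
  set N := ⌈(2:ℝ)^(1/δ)⌉₊ + 1 with hN
  refine ⟨K ^ N, one_le_pow₀ hK1, ?_⟩
  intro m hm
  have hcard := Nat.card_divisors hm
  -- per-prime bound
  have key : ∀ p ∈ m.primeFactors,
      (m.factorization p + 1 : ℝ) ≤
        (if p < N then K else 1) * (p:ℝ) ^ (δ * (m.factorization p : ℕ)) := by
    intro p hp
    have hpp : p.Prime := Nat.prime_of_mem_primeFactors hp
    have hp2 : (2:ℝ) ≤ (p:ℝ) := by exact_mod_cast hpp.two_le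
    set e := m.factorization p with he
    by_cases hsmall : p < N
    · simp only [hsmall, if_true]
      calc (e + 1 : ℝ) ≤ K * (2:ℝ) ^ (δ * e) := stepA δ hδ e
        _ ≤ K * (p:ℝ) ^ (δ * e) := by
            apply mul_le_mul_of_nonneg_left _ (le_trans zero_le_one hK1)
            exact Real.rpow_le_rpow (by norm_num) hp2 (by positivity)
    · simp only [hsmall, if_false, one_mul]
      -- p ≥ N > 2^(1/δ) so p^δ ≥ 2
      have hpN : ((2:ℝ)^(1/δ)) ≤ (p:ℝ) := by
        have : (⌈(2:ℝ)^(1/δ)⌉₊ : ℝ) ≤ (p:ℝ) := by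
          have : N ≤ p := not_lt.mp hsmall
          exact_mod_cast le_trans (Nat.le_succ _) this
        exact le_trans (Nat.le_ceil _) this
      have hpd : (2:ℝ) ≤ (p:ℝ) ^ δ := by
        have := Real.rpow_le_rpow (by positivity) hpN (le_of_lt hδ)
        rwa [← Real.rpow_mul (by norm_num), one_div,
          inv_mul_cancel₀ (ne_of_gt hδ), Real.rpow_one] at this
      have h2e : (e + 1 : ℝ) ≤ (2:ℝ) ^ (e:ℕ) := by
        exact_mod_cast Nat.succ_le_of_lt (Nat.lt_two_pow_self (n := e))
      calc (e + 1 : ℝ) ≤ (2:ℝ) ^ (e:ℕ) := h2e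
        _ ≤ ((p:ℝ) ^ δ) ^ (e:ℕ) := by
            apply pow_le_pow_left₀ (by norm_num) hpd _
        _ = (p:ℝ) ^ (δ * e) := by
            rw [← Real.rpow_natCast ((p:ℝ)^δ), ← Real.rpow_mul (by positivity)]
  -- multiply up
  have hprod : (m.divisors.card : ℝ) = ∏ p ∈ m.primeFactors, (m.factorization p + 1 : ℝ) := by
    rw [hcard]; push_cast; ring
  rw [hprod]
  calc ∏ p ∈ m.primeFactors, (m.factorization p + 1 : ℝ)
      ≤ ∏ p ∈ m.primeFactors,
          (if p < N then K else 1) * (p:ℝ) ^ (δ * (m.factorization p : ℕ)) := by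
        apply Finset.prod_le_prod
        · intro p _; positivity
        · exact key
    _ = (∏ p ∈ m.primeFactors, (if p < N then K else 1)) *
          ∏ p ∈ m.primeFactors, (p:ℝ) ^ (δ * (m.factorization p : ℕ)) := by
        rw [Finset.prod_mul_distrib]
    _ ≤ K ^ N * (m:ℝ) ^ δ := by
        apply mul_le_mul
        · -- product of if's bounded
          rw [Finset.prod_ite, Finset.prod_const, Finset.prod_const, one_pow, mul_one]
          have hsub : (m.primeFactors.filter (· < N)) ⊆ Finset.range N := by
            intro p hp
            simp only [Finset.mem_filter] at hp
            exact Finset.mem_range.mpr hp.2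
          calc K ^ #(m.primeFactors.filter (· < N))
              ≤ K ^ #(Finset.range N) := by
                exact pow_le_pow_right₀ hK1 (Finset.card_le_card hsub)
            _ = K ^ N := by rw [Finset.card_range]
        · -- product of rpow equals m^δ
          have heq : ∀ p ∈ m.primeFactors,
              (p:ℝ) ^ (δ * (m.factorization p : ℕ)) = ((p ^ m.factorization p : ℕ) : ℝ) ^ δ := by
            intro p hp
            rw [mul_comm, Real.rpow_mul (by positivity), Real.rpow_natCast]
            push_cast
            ring
          rw [Finset.prod_congr rfl heq,
            Real.finset_prod_rpow _ _ (fun p _ => by positivity)]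
          have hmm : (∏ p ∈ m.primeFactors, (p ^ m.factorization p : ℕ)) = m := by
            conv_rhs => rw [← Nat.factorization_prod_pow_eq_self hm]
            rfl
          rw [← Nat.cast_prod, hmm]
        · positivity
        · positivity



def Q (n : ℕ) : Finset ((ℕ × ℕ) × ℕ × ℕ) :=
  ((Finset.Ioc 0 n ×ˢ Finset.Ioc 0 n) ×ˢ (Finset.Ioc 0 n ×ˢ Finset.Ioc 0 n)).filter
    (fun q : (ℕ × ℕ) × ℕ × ℕ => q.1.1 * q.2.1 + q.1.2 * q.2.2 = n)

lemma mem_Q {n : ℕ} {q : (ℕ × ℕ) × ℕ × ℕ} :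
    q ∈ Q n ↔ (q.1.1 ∈ Finset.Ioc 0 n ∧ q.1.2 ∈ Finset.Ioc 0 n) ∧
      (q.2.1 ∈ Finset.Ioc 0 n ∧ q.2.2 ∈ Finset.Ioc 0 n) ∧
      q.1.1 * q.2.1 + q.1.2 * q.2.2 = n := by
  simp [Q, Finset.mem_filter, Finset.mem_product, and_assoc]

/-- swap symmetry of `Q n` -/
lemma swap_sum (n : ℕ) (g : ℕ → ℕ → ℕ → ℕ → ℕ) :
    ∑ q ∈ Q n, g q.1.1 q.1.2 q.2.1 q.2.2 = ∑ q ∈ Q n, g q.1.2 q.1.1 q.2.2 q.2.1 := by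
  apply Finset.sum_nbij' (fun q => ((q.1.2, q.1.1), (q.2.2, q.2.1)))
    (fun q => ((q.1.2, q.1.1), (q.2.2, q.2.1)))
  · intro q hq
    rw [mem_Q] at hq ⊢
    exact ⟨⟨hq.1.2, hq.1.1⟩, ⟨hq.2.1.2, hq.2.1.1⟩,
      show q.1.2 * q.2.2 + q.1.1 * q.2.1 = n by omega⟩
  · intro q hq
    rw [mem_Q] at hq ⊢
    exact ⟨⟨hq.1.2, hq.1.1⟩, ⟨hq.2.1.2, hq.2.1.1⟩,
      show q.1.2 * q.2.2 + q.1.1 * q.2.1 = n by omega⟩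
  · intro q _; rfl
  · intro q _; rfl
  · intro q _; rfl

/-- the sum of `g²` over square divisors `g ∈ Ioc 0 n` -/
def F (n m : ℕ) : ℕ := ∑ g ∈ (Finset.Ioc 0 n).filter (fun g => g^2 ∣ m), g^2

lemma sum_sq_le (n : ℕ) :
    ∑ q ∈ Q n, Nat.gcd q.1.1 q.2.1 ^ 2 ≤
      ∑ m ∈ Finset.Ioo 0 n, #((m).divisors) * #((n - m).divisors) * F n m := by
  have hmap : ∀ q ∈ Q n, q.1.1 * q.2.1 ∈ Finset.Ioo 0 n := by
    intro q hq
    rw [mem_Q] at hq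
    simp only [Finset.mem_Ioc] at hq
    simp only [Finset.mem_Ioo]
    constructor
    · exact Nat.mul_pos hq.1.1.1 hq.2.1.1.1
    · nlinarith [hq.1.2.1, hq.2.1.2.1, hq.2.2]
  rw [← Finset.sum_fiberwise_of_maps_to hmap]
  apply Finset.sum_le_sum
  intro m hm
  simp only [Finset.mem_Ioo] at hm
  have hfib : ∀ q ∈ (Q n).filter (fun q => q.1.1 * q.2.1 = m),
      Nat.gcd q.1.1 q.2.1 ^ 2 ≤ F n m := by
    intro q hq
    simp only [Finset.mem_filter] at hq
    obtain ⟨hqQ, hqm⟩ := hq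
    rw [mem_Q] at hqQ
    simp only [Finset.mem_Ioc] at hqQ
    set g := Nat.gcd q.1.1 q.2.1 with hg
    have hg0 : 0 < g := Nat.gcd_pos_of_pos_left _ hqQ.1.1.1
    have hgn : g ≤ n := le_trans (Nat.le_of_dvd hqQ.1.1.1 (Nat.gcd_dvd_left _ _)) hqQ.1.1.2
    have hdvd : g^2 ∣ m := by
      rw [← hqm, sq]
      exact mul_dvd_mul (Nat.gcd_dvd_left _ _) (Nat.gcd_dvd_right _ _)
    apply Finset.single_le_sum (f := fun g : ℕ => g^2) (fun i _ => Nat.zero_le _)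
    simp only [Finset.mem_filter, Finset.mem_Ioc]
    exact ⟨⟨hg0, hgn⟩, hdvd⟩
  calc ∑ q ∈ (Q n).filter (fun q => q.1.1 * q.2.1 = m), Nat.gcd q.1.1 q.2.1 ^ 2
      ≤ #((Q n).filter (fun q => q.1.1 * q.2.1 = m)) • F n m :=
        Finset.sum_le_card_nsmul _ _ _ hfib
    _ = #((Q n).filter (fun q => q.1.1 * q.2.1 = m)) * F n m := by rw [smul_eq_mul]
    _ ≤ (#((m).divisors) * #((n - m).divisors)) * F n m := by
        apply Nat.mul_le_mul_right
        have : #((Q n).filter (fun q => q.1.1 * q.2.1 = m)) ≤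
            #(m.divisors ×ˢ (n - m).divisors) := by
          apply Finset.card_le_card_of_injOn (fun q => (q.1.1, q.1.2))
          · intro q hq
            simp only [Finset.mem_coe, Finset.mem_filter] at hq
            obtain ⟨hqQ, hqm⟩ := hq
            rw [mem_Q] at hqQ
            simp only [Finset.mem_Ioc] at hqQ
            simp only [Finset.mem_coe, Finset.mem_product, Nat.mem_divisors]
            refine ⟨⟨⟨q.2.1, hqm.symm⟩, by omega⟩, ⟨q.2.2, ?_⟩, by omega⟩
            omega
          · intro q hq q' hq' heq
            simp only [Finset.coe_filter, Set.mem_setOf_eq] at hq hq'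
            obtain ⟨hqQ, hqm⟩ := hq
            obtain ⟨hqQ', hqm'⟩ := hq'
            rw [mem_Q] at hqQ hqQ'
            simp only [Finset.mem_Ioc] at hqQ hqQ'
            have h1 : q.1.1 = q'.1.1 := congrArg Prod.fst heq
            have h2 : q.1.2 = q'.1.2 := congrArg Prod.snd heq
            have h3 : q.2.1 = q'.2.1 := by
              have ha : 0 < q.1.1 := hqQ.1.1.1
              have e1 : q.1.1 * q.2.1 = q.1.1 * q'.2.1 := by rw [hqm, h1, hqm']
              exact Nat.eq_of_mul_eq_mul_left ha e1
            have h4 : q.2.2 = q'.2.2 := by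
              have hb : 0 < q.1.2 := hqQ.1.2.1
              have hs : q.1.1 * q.2.1 + q.1.2 * q.2.2 = n := hqQ.2.2
              have hs' : q'.1.1 * q'.2.1 + q'.1.2 * q'.2.2 = n := hqQ'.2.2
              have e0 : q.1.2 * q.2.2 = q'.1.2 * q'.2.2 := by omega
              have e1 : q.1.2 * q.2.2 = q.1.2 * q'.2.2 := by rw [e0, h2]
              exact Nat.eq_of_mul_eq_mul_left hb e1
            exact Prod.ext (Prod.ext h1 h2) (Prod.ext h3 h4)
        simpa [Finset.card_product] using this

lemma sum_F_le (n : ℕ) : ∑ m ∈ Finset.Ioo 0 n, F n m ≤ n * Nat.sqrt n := by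
  unfold F
  simp_rw [Finset.sum_filter]
  rw [Finset.sum_comm]
  have hterm : ∀ g ∈ Finset.Ioc 0 n,
      (∑ m ∈ Finset.Ioo 0 n, if g^2 ∣ m then g^2 else 0) ≤
        if g ≤ Nat.sqrt n then n else 0 := by
    intro g hg
    rw [← Finset.sum_filter, Finset.sum_const, smul_eq_mul]
    by_cases hgs : g ≤ Nat.sqrt n
    · simp only [hgs, if_true]
      have hcard : #((Finset.Ioo 0 n).filter (fun m => g^2 ∣ m)) ≤ n / g^2 := by
        rw [← Nat.Ioc_filter_dvd_card_eq_div n (g^2)]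
        apply Finset.card_le_card
        apply Finset.filter_subset_filter
        exact Finset.Ioo_subset_Ioc_self
      calc #((Finset.Ioo 0 n).filter (fun m => g^2 ∣ m)) * g^2
          ≤ (n / g^2) * g^2 := Nat.mul_le_mul_right _ hcard
        _ ≤ n := Nat.div_mul_le_self n _
    · simp only [hgs, if_false]
      have hemp : (Finset.Ioo 0 n).filter (fun m => g^2 ∣ m) = ∅ := by
        apply Finset.filter_false_of_mem
        intro m hm hdvd
        simp only [Finset.mem_Ioo] at hm
        have h1 : g^2 ≤ m := Nat.le_of_dvd hm.1 hdvd
        have h2 : n < g ^ 2 := Nat.sqrt_lt'.mp (not_le.mp hgs)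
        exact absurd (lt_of_le_of_lt h1 hm.2) (not_lt.mpr (le_of_lt h2))
      rw [hemp, Finset.card_empty, Nat.zero_mul]
  calc ∑ g ∈ Finset.Ioc 0 n, (∑ m ∈ Finset.Ioo 0 n, if g^2 ∣ m then g^2 else 0)
      ≤ ∑ g ∈ Finset.Ioc 0 n, (if g ≤ Nat.sqrt n then n else 0) :=
        Finset.sum_le_sum hterm
    _ = ∑ g ∈ (Finset.Ioc 0 n).filter (· ≤ Nat.sqrt n), n := by
        rw [Finset.sum_filter]
    _ ≤ ∑ g ∈ Finset.Ioc 0 (Nat.sqrt n), n := by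
        apply Finset.sum_le_sum_of_subset
        intro g hgm
        simp only [Finset.mem_filter, Finset.mem_Ioc] at hgm ⊢
        exact ⟨hgm.1.1, hgm.2⟩
    _ = n * Nat.sqrt n := by
        rw [Finset.sum_const, Nat.card_Ioc, smul_eq_mul, Nat.sub_zero, mul_comm]


lemma two_mul_le_sq (x y : ℕ) : x*y + x*y ≤ x^2 + y^2 := by
  rcases le_total x y with h | h
  · obtain ⟨d, rfl⟩ := Nat.exists_eq_add_of_le h
    ring_nf
    nlinarith
  · obtain ⟨d, rfl⟩ := Nat.exists_eq_add_of_le h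
    ring_nf
    nlinarith

lemma S_le_T (n : ℕ) :
    ∑ q ∈ Q n, Nat.gcd q.1.1 q.2.1 * Nat.gcd q.1.2 q.2.2 ≤
      ∑ q ∈ Q n, Nat.gcd q.1.1 q.2.1 ^ 2 := by
  have hswap := swap_sum n (fun a b k l => Nat.gcd a k * Nat.gcd b l)
  have hswap2 := swap_sum n (fun a b k l => Nat.gcd a k ^ 2)
  have key : (∑ q ∈ Q n, Nat.gcd q.1.1 q.2.1 * Nat.gcd q.1.2 q.2.2) +
      (∑ q ∈ Q n, Nat.gcd q.1.1 q.2.1 * Nat.gcd q.1.2 q.2.2) ≤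
      (∑ q ∈ Q n, Nat.gcd q.1.1 q.2.1 ^ 2) + (∑ q ∈ Q n, Nat.gcd q.1.1 q.2.1 ^ 2) := by
    nth_rewrite 2 [hswap]
    nth_rewrite 2 [hswap2]
    rw [← Finset.sum_add_distrib, ← Finset.sum_add_distrib]
    apply Finset.sum_le_sum
    intro q _
    have h1 := two_mul_le_sq (Nat.gcd q.1.1 q.2.1) (Nat.gcd q.1.2 q.2.2)
    have h2 : Nat.gcd q.1.2 q.2.2 * Nat.gcd q.1.1 q.2.1 =
        Nat.gcd q.1.1 q.2.1 * Nat.gcd q.1.2 q.2.2 := mul_comm _ _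
    omega
  omega


open Filter Asymptotics

end TwoCylAux

open TwoCylAux in
/-- For every `ε > 0`, the function
`n ↦ ∑_{a,b,k,ℓ ≥ 1, ak + bℓ = n} gcd(a,k)·gcd(b,ℓ)` is `O(n^{3/2+ε})` as `n → ∞`. -/
theorem two_cylinder_cusp_count_subquadratic (ε : ℝ) (hε : 0 < ε) :
    (fun n : ℕ =>
        ((∑ q ∈ ((Finset.Ioc 0 n ×ˢ Finset.Ioc 0 n) ×ˢ
              (Finset.Ioc 0 n ×ˢ Finset.Ioc 0 n)).filter
            (fun q : (ℕ × ℕ) × ℕ × ℕ => q.1.1 * q.2.1 + q.1.2 * q.2.2 = n),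
            Nat.gcd q.1.1 q.2.1 * Nat.gcd q.1.2 q.2.2 : ℕ) : ℝ))
      =O[atTop] fun n : ℕ => (n : ℝ) ^ ((3 : ℝ) / 2 + ε) := by
  obtain ⟨C, hC1, hC⟩ := divisor_bound (ε/2) (half_pos hε)
  have hC0 : (0:ℝ) ≤ C := le_trans zero_le_one hC1
  rw [isBigO_iff]
  refine ⟨C^2, ?_⟩
  filter_upwards [eventually_ge_atTop 1] with n hn
  have hn0 : (0:ℝ) < (n:ℝ) := by exact_mod_cast hn
  have hn0' : (0:ℝ) ≤ (n:ℝ) := le_of_lt hn0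
  -- the natural number bound
  have hnat : (∑ q ∈ Q n, Nat.gcd q.1.1 q.2.1 * Nat.gcd q.1.2 q.2.2) ≤
      ∑ m ∈ Finset.Ioo 0 n, #((m).divisors) * #((n - m).divisors) * F n m :=
    le_trans (S_le_T n) (sum_sq_le n)
  -- real bound on the divisor-weighted sum
  have hreal : ((∑ m ∈ Finset.Ioo 0 n, #((m).divisors) * #((n - m).divisors) * F n m : ℕ) : ℝ)
      ≤ (C * (n:ℝ)^(ε/2)) * (C * (n:ℝ)^(ε/2)) * ((n:ℝ) * ((Nat.sqrt n : ℕ):ℝ)) := by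
    push_cast
    have step1 : ∀ m ∈ Finset.Ioo 0 n,
        (#((m).divisors) : ℝ) * (#((n - m).divisors) : ℝ) * ((F n m : ℕ) : ℝ) ≤
          (C * (n:ℝ)^(ε/2)) * (C * (n:ℝ)^(ε/2)) * ((F n m : ℕ) : ℝ) := by
      intro m hm
      simp only [Finset.mem_Ioo] at hm
      have hd1 : (#((m).divisors) : ℝ) ≤ C * (n:ℝ)^(ε/2) := by
        calc (#((m).divisors) : ℝ) ≤ C * (m:ℝ)^(ε/2) := hC m hm.1.ne'
          _ ≤ C * (n:ℝ)^(ε/2) := by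
              apply mul_le_mul_of_nonneg_left _ hC0
              apply Real.rpow_le_rpow (Nat.cast_nonneg _) _ (le_of_lt (half_pos hε))
              exact_mod_cast le_of_lt hm.2
      have hd2 : (#(((n - m)).divisors) : ℝ) ≤ C * (n:ℝ)^(ε/2) := by
        have hnm0 : n - m ≠ 0 := by omega
        calc (#(((n - m)).divisors) : ℝ) ≤ C * ((n - m :ℕ):ℝ)^(ε/2) := hC _ hnm0
          _ ≤ C * (n:ℝ)^(ε/2) := by
              apply mul_le_mul_of_nonneg_left _ hC0
              apply Real.rpow_le_rpow (Nat.cast_nonneg _) _ (le_of_lt (half_pos hε))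
              exact_mod_cast Nat.sub_le n m
      have hF0 : (0:ℝ) ≤ ((F n m : ℕ) : ℝ) := Nat.cast_nonneg _
      apply mul_le_mul_of_nonneg_right _ hF0
      apply mul_le_mul hd1 hd2 (Nat.cast_nonneg _)
      positivity
    calc ∑ m ∈ Finset.Ioo 0 n, (#((m).divisors) : ℝ) * (#((n - m).divisors) : ℝ) * ((F n m : ℕ) : ℝ)
        ≤ ∑ m ∈ Finset.Ioo 0 n, (C * (n:ℝ)^(ε/2)) * (C * (n:ℝ)^(ε/2)) * ((F n m : ℕ) : ℝ) :=
          Finset.sum_le_sum step1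
      _ = (C * (n:ℝ)^(ε/2)) * (C * (n:ℝ)^(ε/2)) *
            ∑ m ∈ Finset.Ioo 0 n, ((F n m : ℕ) : ℝ) := by rw [← Finset.mul_sum]
      _ ≤ (C * (n:ℝ)^(ε/2)) * (C * (n:ℝ)^(ε/2)) * (((n:ℝ) * ((Nat.sqrt n : ℕ):ℝ))) := by
          apply mul_le_mul_of_nonneg_left _ (by positivity)
          rw [← Nat.cast_mul, ← Nat.cast_sum]
          exact_mod_cast sum_F_le n
  -- n * sqrt n ≤ n^(3/2)
  have hsqrt : (n:ℝ) * ((Nat.sqrt n : ℕ):ℝ) ≤ (n:ℝ) ^ ((3:ℝ)/2) := by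
    have h1 : ((Nat.sqrt n : ℕ) : ℝ) ≤ (n:ℝ) ^ ((1:ℝ)/2) := by
      rw [← Real.sqrt_eq_rpow]
      have hsq : ((Nat.sqrt n : ℕ):ℝ)^2 ≤ (n:ℝ) := by
        exact_mod_cast Nat.sqrt_le' n
      calc ((Nat.sqrt n : ℕ):ℝ) = Real.sqrt (((Nat.sqrt n : ℕ):ℝ)^2) :=
          (Real.sqrt_sq (by positivity)).symm
        _ ≤ Real.sqrt (n:ℝ) := Real.sqrt_le_sqrt hsq
    calc (n:ℝ) * ((Nat.sqrt n : ℕ) : ℝ) ≤ (n:ℝ) * (n:ℝ)^((1:ℝ)/2) :=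
        mul_le_mul_of_nonneg_left h1 hn0'
      _ = (n:ℝ)^((1:ℝ)) * (n:ℝ)^((1:ℝ)/2) := by rw [Real.rpow_one]
      _ = (n:ℝ)^((3:ℝ)/2) := by rw [← Real.rpow_add hn0]; norm_num
  -- finish
  have hfinal : ((∑ q ∈ Q n, Nat.gcd q.1.1 q.2.1 * Nat.gcd q.1.2 q.2.2 : ℕ) : ℝ) ≤
      C^2 * (n:ℝ) ^ ((3:ℝ)/2 + ε) := by
    calc ((∑ q ∈ Q n, Nat.gcd q.1.1 q.2.1 * Nat.gcd q.1.2 q.2.2 : ℕ) : ℝ)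
        ≤ ((∑ m ∈ Finset.Ioo 0 n, #((m).divisors) * #((n - m).divisors) * F n m : ℕ) : ℝ) := by
          exact_mod_cast hnat
      _ ≤ (C * (n:ℝ)^(ε/2)) * (C * (n:ℝ)^(ε/2)) * ((n:ℝ) * ((Nat.sqrt n : ℕ):ℝ)) := hreal
      _ ≤ (C * (n:ℝ)^(ε/2)) * (C * (n:ℝ)^(ε/2)) * ((n:ℝ) ^ ((3:ℝ)/2)) := by
          apply mul_le_mul_of_nonneg_left hsqrt (by positivity)
      _ = C^2 * ((n:ℝ)^(ε/2) * (n:ℝ)^(ε/2) * (n:ℝ)^((3:ℝ)/2)) := by ring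
      _ = C^2 * (n:ℝ) ^ ((3:ℝ)/2 + ε) := by
          rw [← Real.rpow_add hn0, ← Real.rpow_add hn0]
          congr 1
          ring
  rw [Real.norm_natCast, Real.norm_rpow_of_nonneg hn0']
  rw [Real.norm_natCast]
  exact hfinal
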